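/- arXiv:1802.04497 — 5 statements merged into one kernel-verified Lean document; each statement's English description precedes it below -/
import Mathlib

section
/- With u_c(p0,p1) = 4 c0 c1 D_c(p0,p1) + (c0-c1)^2, the Bayes error ε = ∫ min{c0 p0(x), c1 p1(x)} dx satisfies the upper bound ε ≤ 1/2 - (1/2) u_c(p0,p1). -/
open MeasureTheory

lemma ratio_le_abs (a b : ℝ) (ha : 0 ≤ a) (hb : 0 ≤ b) :
    (a - b) ^ 2 / (a + b) ≤ |a - b| := by
  rcases eq_or_lt_of_le (add_nonneg ha hb) with h | h
  · have ha0 : a = 0 := by linarith [abs_nonneg (a-b)]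
    have : b = 0 := by linarith
    simp [ha0, this]
  · rw [div_le_iff₀ h]
    have h1 : |a - b| ≤ a + b := by
      rw [abs_le]; constructor <;> linarith
    calc (a - b) ^ 2 = |a - b| * |a - b| := by
          rw [abs_mul_abs_self]; ring
    _ ≤ |a - b| * (a + b) := mul_le_mul_of_nonneg_left h1 (abs_nonneg _)

/-- Bayes error upper bound `ε ≤ 1/2 - u_c/2` with
`u_c = ∫ (c0 p0 - c1 p1)²/(c0 p0 + c1 p1)`. -/
theorem bayes_error_upper_bound {d : ℕ} (p0 p1 : (Fin d → ℝ) → ℝ) (c0 c1 : ℝ)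
    (hm0 : Measurable p0) (hm1 : Measurable p1)
    (hp0 : ∀ x, 0 ≤ p0 x) (hp1 : ∀ x, 0 ≤ p1 x)
    (hi0 : Integrable p0) (hi1 : Integrable p1)
    (h10 : ∫ x, p0 x = 1) (h11 : ∫ x, p1 x = 1)
    (hc0 : c0 ∈ Set.Ioo (0:ℝ) 1) (hc1 : c1 ∈ Set.Ioo (0:ℝ) 1)
    (hc : c0 + c1 = 1)
    (hmin : Integrable (fun x => min (c0 * p0 x) (c1 * p1 x)))
    (hint : Integrable (fun x => (c0 * p0 x - c1 * p1 x) ^ 2 / (c0 * p0 x + c1 * p1 x))) :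
    (∫ x, min (c0 * p0 x) (c1 * p1 x)) ≤
      1 / 2 - (1 / 2) * ∫ x, (c0 * p0 x - c1 * p1 x) ^ 2 / (c0 * p0 x + c1 * p1 x) := by
  have hidiff : Integrable (fun x => c0 * p0 x - c1 * p1 x) :=
    (hi0.const_mul c0).sub (hi1.const_mul c1)
  have hiabs : Integrable (fun x => |c0 * p0 x - c1 * p1 x|) := hidiff.abs
  have hisum : Integrable (fun x => c0 * p0 x + c1 * p1 x) :=
    (hi0.const_mul c0).add (hi1.const_mul c1)
  -- key pointwise identity: min a b = (a+b)/2 - |a-b|/2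
  have hmin_eq : (∫ x, min (c0 * p0 x) (c1 * p1 x)) =
      (∫ x, (c0 * p0 x + c1 * p1 x)) / 2 - (∫ x, |c0 * p0 x - c1 * p1 x|) / 2 := by
    rw [← integral_div, ← integral_div, ← integral_sub (hisum.div_const 2) (hiabs.div_const 2)]
    congr 1; funext x
    rcases le_total (c0 * p0 x) (c1 * p1 x) with h | h
    · rw [min_eq_left h, abs_of_nonpos (by linarith)]; ring
    · rw [min_eq_right h, abs_of_nonneg (by linarith)]; ring
  have hsum1 : (∫ x, (c0 * p0 x + c1 * p1 x)) = 1 := by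
    rw [integral_add (hi0.const_mul c0) (hi1.const_mul c1),
      integral_const_mul, integral_const_mul, h10, h11]
    linarith
  have hle : (∫ x, (c0 * p0 x - c1 * p1 x) ^ 2 / (c0 * p0 x + c1 * p1 x)) ≤
      ∫ x, |c0 * p0 x - c1 * p1 x| := by
    apply integral_mono hint hiabs
    intro x
    exact ratio_le_abs _ _ (mul_nonneg hc0.1.le (hp0 x)) (mul_nonneg hc1.1.le (hp1 x))
  rw [hmin_eq, hsum1]
  linarith
end

section
/- With u_c(p0,p1) = ∫ (c0 p0 - c1 p1)^2/(c0 p0 + c1 p1) dx, the Bayes error ε = ∫ min{c0 p0, c1 p1} dx satisfies the lower bound ε ≥ 1/2 - (1/2) √(u_c(p0,p1)). -/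
open MeasureTheory

lemma min_eq_half' (a b : ℝ) : min a b = (a + b - |a - b|) / 2 := by
  rcases le_total a b with h | h
  · rw [min_eq_left h, abs_of_nonpos (by linarith)]; ring
  · rw [min_eq_right h, abs_of_nonneg (by linarith)]; ring

/-- Bayes error lower bound `ε ≥ 1/2 - (1/2)√(u_c)` with
`u_c = ∫ (c0 p0 - c1 p1)²/(c0 p0 + c1 p1)`. -/
theorem bayes_error_lower_bound {d : ℕ} (p0 p1 : (Fin d → ℝ) → ℝ) (c0 c1 : ℝ)
    (hm0 : Measurable p0) (hm1 : Measurable p1)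
    (hp0 : ∀ x, 0 ≤ p0 x) (hp1 : ∀ x, 0 ≤ p1 x)
    (hi0 : Integrable p0) (hi1 : Integrable p1)
    (h10 : ∫ x, p0 x = 1) (h11 : ∫ x, p1 x = 1)
    (hc0 : c0 ∈ Set.Ioo (0:ℝ) 1) (hc1 : c1 ∈ Set.Ioo (0:ℝ) 1)
    (hc : c0 + c1 = 1)
    (hmin : Integrable (fun x => min (c0 * p0 x) (c1 * p1 x)))
    (hint : Integrable (fun x => (c0 * p0 x - c1 * p1 x) ^ 2 / (c0 * p0 x + c1 * p1 x))) :
    1 / 2 - (1 / 2) * Real.sqrt (∫ x, (c0 * p0 x - c1 * p1 x) ^ 2 / (c0 * p0 x + c1 * p1 x))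
      ≤ ∫ x, min (c0 * p0 x) (c1 * p1 x) := by
  set s : (Fin d → ℝ) → ℝ := fun x => c0 * p0 x + c1 * p1 x with hs_def
  set f : (Fin d → ℝ) → ℝ := fun x => c0 * p0 x - c1 * p1 x with hf_def
  have hs_nonneg : ∀ x, 0 ≤ s x := fun x =>
    add_nonneg (mul_nonneg hc0.1.le (hp0 x)) (mul_nonneg hc1.1.le (hp1 x))
  have hf_zero : ∀ x, s x = 0 → f x = 0 := by
    intro x hx
    have hx' : c0 * p0 x + c1 * p1 x = 0 := hx
    have h0 : c0 * p0 x = 0 ∧ c1 * p1 x = 0 := by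
      constructor <;> nlinarith [mul_nonneg hc0.1.le (hp0 x), mul_nonneg hc1.1.le (hp1 x)]
    simp [hf_def, h0.1, h0.2]
  -- integrability facts
  have hif : Integrable f := ((hi0.const_mul c0).sub (hi1.const_mul c1))
  have his : Integrable s := ((hi0.const_mul c0).add (hi1.const_mul c1))
  have hms : Measurable s := (hm0.const_mul c0).add (hm1.const_mul c1)
  have hmf : Measurable f := (hm0.const_mul c0).sub (hm1.const_mul c1)
  have hints : ∫ x, s x = 1 := by
    have h' : ∫ x, (c0 * p0 x + c1 * p1 x) = 1 := by
      rw [integral_add (hi0.const_mul c0) (hi1.const_mul c1), integral_const_mul,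
        integral_const_mul, h10, h11]
      linarith
    exact h'
  -- h = |f| / sqrt s
  set h : (Fin d → ℝ) → ℝ := fun x => |f x| / Real.sqrt (s x) with hh_def
  have hh_sq : ∀ x, h x ^ 2 = f x ^ 2 / s x := by
    intro x
    rcases eq_or_lt_of_le (hs_nonneg x) with he | hl
    · simp [hh_def, ← he, hf_zero x he.symm]
    · rw [hh_def]
      rw [div_pow, sq_abs, Real.sq_sqrt (hs_nonneg x)]
  have hfactor : ∀ x, |f x| = h x * Real.sqrt (s x) := by
    intro x
    rcases eq_or_lt_of_le (hs_nonneg x) with he | hl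
    · simp [hh_def, hf_zero x he.symm]
    · rw [hh_def, div_mul_cancel₀]
      exact (Real.sqrt_pos.2 hl).ne'
  -- Memℒp statements
  have hmh : Measurable h := hmf.abs.div (hms.sqrt)
  have hLh : MemLp h 2 (volume : Measure (Fin d → ℝ)) := by
    rw [memLp_two_iff_integrable_sq hmh.aestronglyMeasurable]
    have : (fun x => h x ^ 2) = fun x => f x ^ 2 / s x := funext hh_sq
    rw [this]; exact hint
  have hLs : MemLp (fun x => Real.sqrt (s x)) 2 (volume : Measure (Fin d → ℝ)) := by
    rw [memLp_two_iff_integrable_sq hms.sqrt.aestronglyMeasurable]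
    have : (fun x => Real.sqrt (s x) ^ 2) = s := by
      funext x; exact Real.sq_sqrt (hs_nonneg x)
    rw [this]; exact his
  -- Cauchy–Schwarz
  have hCS : ∫ x, |f x| ≤
      (∫ x, f x ^ 2 / s x) ^ ((1:ℝ)/2) * (∫ x, s x) ^ ((1:ℝ)/2) := by
    have hpq : Real.HolderConjugate 2 2 := Real.HolderConjugate.two_two
    have h2 : ENNReal.ofReal 2 = 2 := by norm_num
    have key := integral_mul_le_Lp_mul_Lq_of_nonneg hpq
      (Filter.Eventually.of_forall fun x => div_nonneg (abs_nonneg _) (Real.sqrt_nonneg _))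
      (Filter.Eventually.of_forall fun x => Real.sqrt_nonneg (s x))
      (h2.symm ▸ hLh) (h2.symm ▸ hLs)
    have e0 : ∫ x, |f x| = ∫ a, |f a| / Real.sqrt (s a) * Real.sqrt (s a) :=
      integral_congr_ae (Filter.Eventually.of_forall fun x => hfactor x)
    have e1 : (fun a => (|f a| / Real.sqrt (s a)) ^ (2:ℝ)) = fun x => f x ^ 2 / s x := by
      funext x
      rw [show ((2:ℝ)) = ((2:ℕ):ℝ) by norm_num, Real.rpow_natCast]
      exact hh_sq x
    have e2 : (fun a => Real.sqrt (s a) ^ (2:ℝ)) = s := by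
      funext x
      rw [show ((2:ℝ)) = ((2:ℕ):ℝ) by norm_num, Real.rpow_natCast]
      exact Real.sq_sqrt (hs_nonneg x)
    rw [e1, e2] at key
    rw [e0]
    exact key
  have hu_nonneg : 0 ≤ ∫ x, f x ^ 2 / s x :=
    integral_nonneg fun x => div_nonneg (sq_nonneg _) (hs_nonneg x)
  have hCS' : ∫ x, |f x| ≤ Real.sqrt (∫ x, f x ^ 2 / s x) := by
    rw [hints] at hCS
    simpa [Real.sqrt_eq_rpow, Real.one_rpow] using hCS
  -- final computation
  have hmin_eq : ∫ x, min (c0 * p0 x) (c1 * p1 x) = (1 - ∫ x, |f x|) / 2 := by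
    have : (fun x => min (c0 * p0 x) (c1 * p1 x)) = fun x => (s x - |f x|) / 2 := by
      funext x; rw [min_eq_half' (c0 * p0 x) (c1 * p1 x)]
    rw [this]
    rw [integral_div, integral_sub his hif.abs, hints]
  rw [hmin_eq]
  have : Real.sqrt (∫ x, (c0 * p0 x - c1 * p1 x) ^ 2 / (c0 * p0 x + c1 * p1 x))
      = Real.sqrt (∫ x, f x ^ 2 / s x) := rfl
  rw [this]
  linarith
end

section
/- Chain of bounds: for probability densities p0, p1 and priors c0, c1 with c0+c1=1, letting u = ∫ (c0 p0 - c1 p1)^2/(c0 p0 + c1 p1) dx, one has (c0-c1)^2 ≤ u ≤ 1, hence 0 ≤ 1/2 - (1/2)√u ≤ 1/2 - (1/2)u ≤ 2 c0 c1. -/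
open MeasureTheory

/-- Chain of bounds for `u = ∫ (c0 p0 - c1 p1)²/(c0 p0 + c1 p1)`:
`(c0-c1)² ≤ u ≤ 1`, hence `0 ≤ 1/2 - √u/2 ≤ 1/2 - u/2 ≤ 2 c0 c1`. -/
theorem hp_chain_of_bounds {d : ℕ} (p0 p1 : (Fin d → ℝ) → ℝ) (c0 c1 : ℝ)
    (hm0 : Measurable p0) (hm1 : Measurable p1)
    (hp0 : ∀ x, 0 ≤ p0 x) (hp1 : ∀ x, 0 ≤ p1 x)
    (hi0 : Integrable p0) (hi1 : Integrable p1)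
    (h10 : ∫ x, p0 x = 1) (h11 : ∫ x, p1 x = 1)
    (hc0 : c0 ∈ Set.Ioo (0:ℝ) 1) (hc1 : c1 ∈ Set.Ioo (0:ℝ) 1)
    (hc : c0 + c1 = 1)
    (hint : Integrable (fun x => (c0 * p0 x - c1 * p1 x) ^ 2 / (c0 * p0 x + c1 * p1 x))) :
    (c0 - c1) ^ 2 ≤ (∫ x, (c0 * p0 x - c1 * p1 x) ^ 2 / (c0 * p0 x + c1 * p1 x)) ∧
    (∫ x, (c0 * p0 x - c1 * p1 x) ^ 2 / (c0 * p0 x + c1 * p1 x)) ≤ 1 ∧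
    0 ≤ 1 / 2 - (1 / 2) * Real.sqrt (∫ x, (c0 * p0 x - c1 * p1 x) ^ 2 / (c0 * p0 x + c1 * p1 x)) ∧
    1 / 2 - (1 / 2) * Real.sqrt (∫ x, (c0 * p0 x - c1 * p1 x) ^ 2 / (c0 * p0 x + c1 * p1 x)) ≤
      1 / 2 - (1 / 2) * (∫ x, (c0 * p0 x - c1 * p1 x) ^ 2 / (c0 * p0 x + c1 * p1 x)) ∧
    1 / 2 - (1 / 2) * (∫ x, (c0 * p0 x - c1 * p1 x) ^ 2 / (c0 * p0 x + c1 * p1 x)) ≤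
      2 * c0 * c1 := by
  obtain ⟨hc0p, hc0l⟩ := hc0
  obtain ⟨hc1p, hc1l⟩ := hc1
  set t : ℝ := c0 - c1 with ht
  set u : ℝ := ∫ x, (c0 * p0 x - c1 * p1 x) ^ 2 / (c0 * p0 x + c1 * p1 x) with hu
  -- integrability of linear combinations
  have hiL : Integrable (fun x => 2 * t * (c0 * p0 x - c1 * p1 x)
      - t ^ 2 * (c0 * p0 x + c1 * p1 x)) := by
    apply Integrable.sub
    · exact (((hi0.const_mul c0).sub (hi1.const_mul c1)).const_mul (2 * t))
    · exact (((hi0.const_mul c0).add (hi1.const_mul c1)).const_mul (t ^ 2))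
  have hiG : Integrable (fun x => c0 * p0 x + c1 * p1 x) :=
    (hi0.const_mul c0).add (hi1.const_mul c1)
  have hIG : (∫ x, (c0 * p0 x + c1 * p1 x)) = 1 := by
    rw [integral_add (hi0.const_mul c0) (hi1.const_mul c1),
      integral_const_mul, integral_const_mul, h10, h11]
    simpa using hc
  have hIF : (∫ x, (c0 * p0 x - c1 * p1 x)) = t := by
    rw [integral_sub (hi0.const_mul c0) (hi1.const_mul c1),
      integral_const_mul, integral_const_mul, h10, h11, ht]
    ring
  -- lower bound : (c0-c1)^2 ≤ u
  have hlow : t ^ 2 ≤ u := by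
    have hpt : ∀ x, 2 * t * (c0 * p0 x - c1 * p1 x) - t ^ 2 * (c0 * p0 x + c1 * p1 x)
        ≤ (c0 * p0 x - c1 * p1 x) ^ 2 / (c0 * p0 x + c1 * p1 x) := by
      intro x
      have ha : 0 ≤ c0 * p0 x := mul_nonneg hc0p.le (hp0 x)
      have hb : 0 ≤ c1 * p1 x := mul_nonneg hc1p.le (hp1 x)
      rcases eq_or_lt_of_le (add_nonneg ha hb) with h | h
      · have ha0 : c0 * p0 x = 0 := by linarith
        have hb0 : c1 * p1 x = 0 := by linarith
        simp [ha0, hb0]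
      · rw [le_div_iff₀ h]
        nlinarith [sq_nonneg ((c0 * p0 x - c1 * p1 x) - t * (c0 * p0 x + c1 * p1 x))]
    have := integral_mono hiL hint hpt
    have hiA : Integrable (fun x => 2 * t * (c0 * p0 x - c1 * p1 x)) := by
      have := (((hi0.const_mul c0).sub (hi1.const_mul c1)).const_mul (2 * t)); simpa using this
    have hiB : Integrable (fun x => t ^ 2 * (c0 * p0 x + c1 * p1 x)) := by
      have := (((hi0.const_mul c0).add (hi1.const_mul c1)).const_mul (t ^ 2)); simpa using this
    calc t ^ 2 = 2 * t * t - t ^ 2 * 1 := by ring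
      _ = ∫ x, (2 * t * (c0 * p0 x - c1 * p1 x) - t ^ 2 * (c0 * p0 x + c1 * p1 x)) := by
          rw [integral_sub hiA hiB, integral_const_mul, integral_const_mul, hIF, hIG]
      _ ≤ u := this
  -- upper bound : u ≤ 1
  have hup : u ≤ 1 := by
    have hpt : ∀ x, (c0 * p0 x - c1 * p1 x) ^ 2 / (c0 * p0 x + c1 * p1 x)
        ≤ c0 * p0 x + c1 * p1 x := by
      intro x
      have ha : 0 ≤ c0 * p0 x := mul_nonneg hc0p.le (hp0 x)
      have hb : 0 ≤ c1 * p1 x := mul_nonneg hc1p.le (hp1 x)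
      rcases eq_or_lt_of_le (add_nonneg ha hb) with h | h
      · simp [← h]
      · rw [div_le_iff₀ h]
        nlinarith
    have := integral_mono hint hiG hpt
    rwa [hIG] at this
  have hu0 : 0 ≤ u := le_trans (sq_nonneg t) hlow
  have hsqle : Real.sqrt u ≤ 1 := by
    rw [show (1:ℝ) = Real.sqrt 1 by simp]
    exact Real.sqrt_le_sqrt hup
  have husq : u ≤ Real.sqrt u := by
    nlinarith [Real.sq_sqrt hu0, Real.sqrt_nonneg u]
  have ht2 : t ^ 2 = 1 - 4 * (c0 * c1) := by
    rw [ht]; nlinarith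
  refine ⟨hlow, hup, by nlinarith [Real.sqrt_nonneg u], by linarith, by nlinarith⟩
end

section
/- Under a uniformly random labeling of N = m+n points, the variance of the cross-match statistic of a fixed perfect matching is Var[A] = 2 n (n-1) m (m-1) / ((N-3)(N-1)^2). -/
open Finset

lemma aux_half {V : Type*} [Fintype V] [DecidableEq V]
    (f : V → V) (hinv : ∀ v, f (f v) = v) (s : Finset V) :
    (univ.filter fun v => Xor (v ∈ s) (f v ∈ s)).card
      = 2 * (univ.filter fun v => v ∈ s ∧ f v ∉ s).card := by
  classical
  have hsplit : (univ.filter fun v => Xor (v ∈ s) (f v ∈ s))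
      = (univ.filter fun v => v ∈ s ∧ f v ∉ s) ∪ (univ.filter fun v => f v ∈ s ∧ v ∉ s) := by
    rw [← filter_or]
    apply filter_congr
    intro v _
    simp [Xor]
  have hdisj : Disjoint (univ.filter fun v => v ∈ s ∧ f v ∉ s)
      (univ.filter fun v => f v ∈ s ∧ v ∉ s) := by
    rw [disjoint_left]
    intro a ha hb
    simp only [mem_filter] at ha hb
    exact hb.2.2 ha.2.1
  have hcard : (univ.filter fun v => f v ∈ s ∧ v ∉ s).card
      = (univ.filter fun v => v ∈ s ∧ f v ∉ s).card := by
    apply card_bij' (fun v _ => f v) (fun v _ => f v)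
    · intro a ha
      simp only [mem_filter, mem_univ, true_and] at ha ⊢
      rw [hinv]
      exact ⟨ha.1, ha.2⟩
    · intro a ha
      simp only [mem_filter, mem_univ, true_and] at ha ⊢
      rw [hinv]
      exact ⟨ha.1, ha.2⟩
    · intro a _; exact hinv a
    · intro a _; exact hinv a
  rw [hsplit, card_union_of_disjoint hdisj, hcard, two_mul]

lemma count_lemma {V : Type*} [Fintype V] [DecidableEq V] (m : ℕ)
    (X Y : Finset V) (hXY : Disjoint X Y) (hm : X.card ≤ m) :
    (univ.filter (fun s : Finset V => s.card = m ∧ X ⊆ s ∧ Disjoint Y s)).card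
      = (Fintype.card V - (X.card + Y.card)).choose (m - X.card) := by
  classical
  have hkey : (univ.filter (fun s : Finset V => s.card = m ∧ X ⊆ s ∧ Disjoint Y s)).card
      = (Finset.powersetCard (m - X.card) ((univ \ X) \ Y)).card := by
    apply card_bij' (fun s _ => s \ X) (fun t _ => t ∪ X)
    · intro s hs
      simp only [mem_filter, mem_univ, true_and] at hs
      rw [mem_powersetCard]
      constructor
      · intro x hx
        simp only [mem_sdiff] at hx ⊢
        exact ⟨⟨mem_univ x, hx.2⟩, fun hxY => (disjoint_left.mp hs.2.2) hxY hx.1⟩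
      · rw [card_sdiff_of_subset hs.2.1, hs.1]
    · intro t ht
      rw [mem_powersetCard] at ht
      simp only [mem_filter, mem_univ, true_and]
      have htX : Disjoint t X := by
        rw [disjoint_left]
        intro x hx hX
        have := ht.1 hx
        simp only [mem_sdiff] at this
        exact this.1.2 hX
      refine ⟨?_, subset_union_right, ?_⟩
      · rw [card_union_of_disjoint htX, ht.2]
        omega
      · rw [disjoint_union_right]
        refine ⟨?_, hXY.symm⟩
        rw [disjoint_left]
        intro x hY hx
        have := ht.1 hx
        simp only [mem_sdiff] at this
        exact this.2 hY
    · intro s hs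
      simp only [mem_filter] at hs
      exact sdiff_union_of_subset hs.2.2.1
    · intro t ht
      rw [mem_powersetCard] at ht
      apply union_sdiff_cancel_right
      rw [disjoint_left]
      intro x hx hX
      have := ht.1 hx
      simp only [mem_sdiff] at this
      exact this.1.2 hX
  rw [hkey, card_powersetCard]
  congr 2
  have hYsub : Y ⊆ univ \ X := by
    intro x hx
    simp only [mem_sdiff, mem_univ, true_and]
    exact fun hX => (disjoint_left.mp hXY) hX hx
  rw [card_sdiff_of_subset hYsub, card_sdiff_of_subset (subset_univ X), card_univ, Nat.sub_sub]

lemma chooseI1 (a b : ℕ) :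
    (a + b).choose a * ((a + b + 2) * (a + b + 1))
      = (a + b + 2).choose (a + 1) * ((a + 1) * (b + 1)) := by
  have h2 : (a + b + 1) * (a + b).choose b = (a + b + 1).choose (b + 1) * (b + 1) :=
    Nat.add_one_mul_choose_eq (a + b) b
  have hs1 : (a + b).choose b = (a + b).choose a := Nat.choose_symm_add.symm
  have hs2 : (a + b + 1).choose (b + 1) = (a + b + 1).choose a := by
    have : a + b + 1 = a + (b + 1) := by ring
    rw [this]
    exact Nat.choose_symm_add.symm
  have h2' : (a + b + 1) * (a + b).choose a = (a + b + 1).choose a * (b + 1) := by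
    rw [← hs1, ← hs2]; exact h2
  have h3 : (a + b + 2) * (a + b + 1).choose a = (a + b + 2).choose (a + 1) * (a + 1) :=
    Nat.add_one_mul_choose_eq (a + b + 1) a
  calc (a + b).choose a * ((a + b + 2) * (a + b + 1))
      = (a + b + 2) * ((a + b + 1) * (a + b).choose a) := by ring
    _ = (a + b + 2) * ((a + b + 1).choose a * (b + 1)) := by rw [h2']
    _ = (b + 1) * ((a + b + 2) * (a + b + 1).choose a) := by ring
    _ = (b + 1) * ((a + b + 2).choose (a + 1) * (a + 1)) := by rw [h3]
    _ = (a + b + 2).choose (a + 1) * ((a + 1) * (b + 1)) := by ring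

lemma chooseI2 (a b : ℕ) :
    (a + b).choose a * ((a + b + 4) * (a + b + 3) * (a + b + 2) * (a + b + 1))
      = (a + b + 4).choose (a + 2) * ((a + 2) * (a + 1) * (b + 2) * (b + 1)) := by
  have h1 := chooseI1 a b
  have h2 := chooseI1 (a + 1) (b + 1)
  have e : a + 1 + (b + 1) = a + b + 2 := by ring
  rw [e] at h2
  have e2 : a + b + 2 + 2 = a + b + 4 := by ring
  rw [e2] at h2
  calc (a + b).choose a * ((a + b + 4) * (a + b + 3) * (a + b + 2) * (a + b + 1))
      = ((a + b).choose a * ((a + b + 2) * (a + b + 1))) * ((a + b + 4) * (a + b + 3)) := by ring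
    _ = ((a + b + 2).choose (a + 1) * ((a + 1) * (b + 1))) * ((a + b + 4) * (a + b + 3)) := by
        rw [h1]
    _ = ((a + b + 2).choose (a + 1) * ((a + b + 4) * (a + b + 3))) * ((a + 1) * (b + 1)) := by
        ring
    _ = ((a + b + 4).choose (a + 1 + 1) * ((a + 1 + 1) * (b + 1 + 1))) * ((a + 1) * (b + 1)) := by
        rw [h2]
    _ = (a + b + 4).choose (a + 2) * ((a + 2) * (a + 1) * (b + 2) * (b + 1)) := by ring_nf

lemma countR1 {V : Type*} [Fintype V] [DecidableEq V] (m n : ℕ)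
    (hmn : m + n = Fintype.card V) (a b : V) (hab : a ≠ b) :
    ((univ.filter fun s : Finset V => s.card = m ∧ a ∈ s ∧ b ∉ s).card : ℝ)
      * (((m : ℝ) + n) * ((m : ℝ) + n - 1))
      = ((m + n).choose m : ℝ) * (m * n) := by
  classical
  rcases Nat.eq_zero_or_pos m with hm0 | hm
  · subst hm0
    have : (univ.filter fun s : Finset V => s.card = 0 ∧ a ∈ s ∧ b ∉ s) = ∅ := by
      rw [filter_eq_empty_iff]
      rintro s _ ⟨h1, h2, _⟩
      rw [card_eq_zero] at h1
      subst h1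
      exact absurd h2 (notMem_empty a)
    rw [this]
    simp
  rcases Nat.eq_zero_or_pos n with hn0 | hn
  · subst hn0
    have : (univ.filter fun s : Finset V => s.card = m ∧ a ∈ s ∧ b ∉ s) = ∅ := by
      rw [filter_eq_empty_iff]
      rintro s _ ⟨h1, _, h3⟩
      have : s = univ := by
        apply Finset.eq_univ_of_card
        omega
      exact h3 (this ▸ mem_univ b)
    rw [this]
    simp
  obtain ⟨m', rfl⟩ : ∃ m', m = m' + 1 := ⟨m - 1, by omega⟩
  obtain ⟨n', rfl⟩ : ∃ n', n = n' + 1 := ⟨n - 1, by omega⟩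
  have hcount : (univ.filter fun s : Finset V => s.card = m' + 1 ∧ a ∈ s ∧ b ∉ s).card
      = (m' + n').choose m' := by
    have hpred : (univ.filter fun s : Finset V => s.card = m' + 1 ∧ a ∈ s ∧ b ∉ s)
        = univ.filter (fun s : Finset V => s.card = m' + 1 ∧ ({a} : Finset V) ⊆ s
            ∧ Disjoint ({b} : Finset V) s) := by
      apply filter_congr
      intro s _
      simp [singleton_subset_iff, disjoint_singleton_left]
    rw [hpred, count_lemma (m' + 1) {a} {b}
      (by simp only [disjoint_singleton_left, mem_singleton]; exact hab) (by simp)]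
    congr 1 <;> simp <;> omega
  rw [hcount]
  push_cast
  have hN : (m' + 1) + (n' + 1) = m' + n' + 2 := by ring
  rw [hN]
  have : ((m' + n').choose m' * ((m' + n' + 2) * (m' + n' + 1)) : ℝ)
      = ((m' + n' + 2).choose (m' + 1) * ((m' + 1) * (n' + 1)) : ℝ) := by
    exact_mod_cast congrArg (Nat.cast : ℕ → ℝ) (chooseI1 m' n')
  push_cast at this
  nlinarith [this]

lemma countR2 {V : Type*} [Fintype V] [DecidableEq V] (m n : ℕ)
    (hmn : m + n = Fintype.card V) (a b c d : V)
    (hab : a ≠ b) (hcd : c ≠ d) (hac : a ≠ c) (had : a ≠ d) (hbc : b ≠ c) (hbd : b ≠ d) :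
    ((univ.filter fun s : Finset V =>
        s.card = m ∧ ((a ∈ s ∧ c ∉ s) ∧ (b ∈ s ∧ d ∉ s))).card : ℝ)
      * (((m : ℝ) + n) * ((m : ℝ) + n - 1) * ((m : ℝ) + n - 2) * ((m : ℝ) + n - 3))
      = ((m + n).choose m : ℝ) * ((m : ℝ) * ((m : ℝ) - 1)) * ((n : ℝ) * ((n : ℝ) - 1)) := by
  classical
  rcases Nat.lt_or_ge m 2 with hm | hm
  · have hzero : (univ.filter fun s : Finset V =>
        s.card = m ∧ ((a ∈ s ∧ c ∉ s) ∧ (b ∈ s ∧ d ∉ s))) = ∅ := by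
      rw [filter_eq_empty_iff]
      rintro s _ ⟨h1, ⟨ha, _⟩, ⟨hb, _⟩⟩
      have : ({a, b} : Finset V) ⊆ s := by
        intro x hx
        simp only [mem_insert, mem_singleton] at hx
        rcases hx with rfl | rfl
        · exact ha
        · exact hb
      have h2 := card_le_card this
      rw [card_insert_of_notMem (by simp [hab]), card_singleton] at h2
      omega
    rw [hzero]
    interval_cases m <;> simp
  rcases Nat.lt_or_ge n 2 with hn | hn
  · have hzero : (univ.filter fun s : Finset V =>
        s.card = m ∧ ((a ∈ s ∧ c ∉ s) ∧ (b ∈ s ∧ d ∉ s))) = ∅ := by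
      rw [filter_eq_empty_iff]
      rintro s _ ⟨h1, ⟨_, hc⟩, ⟨_, hd⟩⟩
      have hsub : ({c, d} : Finset V) ⊆ univ \ s := by
        intro x hx
        simp only [mem_insert, mem_singleton] at hx
        simp only [mem_sdiff, mem_univ, true_and]
        rcases hx with rfl | rfl
        · exact hc
        · exact hd
      have h2 := card_le_card hsub
      rw [card_insert_of_notMem (by simp [hcd]), card_singleton,
        card_sdiff_of_subset (subset_univ s), card_univ] at h2
      omega
    rw [hzero]
    have : (n : ℝ) * ((n : ℝ) - 1) = 0 := by
      interval_cases n <;> norm_num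
    rw [this]
    simp
  obtain ⟨m', rfl⟩ : ∃ m', m = m' + 2 := ⟨m - 2, by omega⟩
  obtain ⟨n', rfl⟩ : ∃ n', n = n' + 2 := ⟨n - 2, by omega⟩
  have hcount : (univ.filter fun s : Finset V =>
        s.card = m' + 2 ∧ ((a ∈ s ∧ c ∉ s) ∧ (b ∈ s ∧ d ∉ s))).card
      = (m' + n').choose m' := by
    have hpred : (univ.filter fun s : Finset V =>
          s.card = m' + 2 ∧ ((a ∈ s ∧ c ∉ s) ∧ (b ∈ s ∧ d ∉ s)))
        = univ.filter (fun s : Finset V => s.card = m' + 2 ∧ ({a, b} : Finset V) ⊆ s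
            ∧ Disjoint ({c, d} : Finset V) s) := by
      apply filter_congr
      intro s _
      simp only [insert_subset_iff, singleton_subset_iff, disjoint_insert_left,
        disjoint_singleton_left, eq_iff_iff]
      tauto
    rw [hpred, count_lemma (m' + 2) {a, b} {c, d} ?_ ?_]
    · have h1 : ({a, b} : Finset V).card = 2 := by
        rw [card_insert_of_notMem (by simp [hab]), card_singleton]
      have h2 : ({c, d} : Finset V).card = 2 := by
        rw [card_insert_of_notMem (by simp [hcd]), card_singleton]
      rw [h1, h2]
      congr 1
      omega
    · rw [disjoint_left]
      intro x hx hy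
      simp only [mem_insert, mem_singleton] at hx hy
      rcases hx with rfl | rfl <;> rcases hy with rfl | rfl <;> tauto
    · have h1 : ({a, b} : Finset V).card = 2 := by
        rw [card_insert_of_notMem (by simp [hab]), card_singleton]
      omega
  rw [hcount, show m' + 2 + (n' + 2) = m' + n' + 4 from by omega]
  push_cast
  have : ((m' + n').choose m' * ((m' + n' + 4) * (m' + n' + 3) * (m' + n' + 2) * (m' + n' + 1)) : ℝ)
      = ((m' + n' + 4).choose (m' + 2) * ((m' + 2) * (m' + 1) * (n' + 2) * (n' + 1)) : ℝ) := by
    exact_mod_cast congrArg (Nat.cast : ℕ → ℝ) (chooseI2 m' n')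
  linear_combination this

set_option maxHeartbeats 2000000 in
/-- Under a uniformly random labeling of `N = m + n` points (`N ≥ 4` even),
the variance of the cross-match statistic of a fixed perfect matching (fixed-point-free
involution `f`) is `Var[A] = 2 n (n-1) m (m-1) / ((N-3)(N-1)²)`. -/
theorem crossmatch_variance {V : Type*} [Fintype V] [DecidableEq V]
    (f : V → V) (hinv : ∀ v, f (f v) = v) (hne : ∀ v, f v ≠ v)
    (m n N : ℕ) (hN : N = Fintype.card V) (hmn : m + n = N)
    (hN4 : 4 ≤ N) (hNeven : Even N) :
    (∑ s ∈ Finset.univ.filter (fun s : Finset V => s.card = m),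
        (((Finset.univ.filter fun v => Xor (v ∈ s) (f v ∈ s)).card / 2 : ℕ) : ℝ) ^ 2)
      / (Finset.univ.filter (fun s : Finset V => s.card = m)).card
    - ((∑ s ∈ Finset.univ.filter (fun s : Finset V => s.card = m),
        (((Finset.univ.filter fun v => Xor (v ∈ s) (f v ∈ s)).card / 2 : ℕ) : ℝ))
      / (Finset.univ.filter (fun s : Finset V => s.card = m)).card) ^ 2
      = 2 * n * ((n : ℝ) - 1) * m * ((m : ℝ) - 1) / (((N : ℝ) - 3) * ((N : ℝ) - 1) ^ 2) := by
  classical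
  have hmnV : m + n = Fintype.card V := by omega
  set S : Finset (Finset V) := univ.filter (fun s : Finset V => s.card = m) with hS
  -- replace the halved Xor count by g s
  have hhalf : ∀ s : Finset V,
      ((univ.filter fun v => Xor (v ∈ s) (f v ∈ s)).card / 2 : ℕ)
        = (univ.filter fun v => v ∈ s ∧ f v ∉ s).card := by
    intro s
    rw [aux_half f hinv s]
    exact Nat.mul_div_cancel_left _ (by norm_num)
  simp only [hhalf]
  -- cardinality of S
  have hScard : S.card = N.choose m := by
    rw [hS, ← powerset_univ, ← powersetCard_eq_filter, card_powersetCard, card_univ, hN]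
  -- positivity facts
  have hT0 : (0 : ℝ) < (N.choose m : ℝ) := by
    exact_mod_cast Nat.choose_pos (by omega)
  have hNR : (4 : ℝ) ≤ (N : ℝ) := by exact_mod_cast hN4
  have hmnR : (m : ℝ) + n = (N : ℝ) := by exact_mod_cast hmn
  have hp0 : (0 : ℝ) < (N : ℝ) := by nlinarith
  have hp1 : (0 : ℝ) < (N : ℝ) - 1 := by nlinarith
  have hp2 : (0 : ℝ) < (N : ℝ) - 2 := by nlinarith
  have hp3 : (0 : ℝ) < (N : ℝ) - 3 := by nlinarith
  -- indicator rewriting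
  have hind : ∀ s : Finset V, ((univ.filter fun v => v ∈ s ∧ f v ∉ s).card : ℝ)
      = ∑ v : V, (if v ∈ s ∧ f v ∉ s then (1 : ℝ) else 0) := by
    intro s
    rw [card_filter]
    push_cast
    rfl
  -- value of single counts
  have hc1 : ∀ v : V,
      ((univ.filter fun s : Finset V => s.card = m ∧ (v ∈ s ∧ f v ∉ s)).card : ℝ)
        = (N.choose m : ℝ) * (m * n) / ((N : ℝ) * ((N : ℝ) - 1)) := by
    intro v
    have h := countR1 (V := V) m n hmnV v (f v) (fun h => hne v h.symm)
    rw [hmnR, hmn] at h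
    rw [eq_div_iff (by nlinarith)]
    exact h
  -- double counts for good pairs
  have hc2 : ∀ v w : V, w ≠ v → w ≠ f v →
      ((univ.filter fun s : Finset V =>
          s.card = m ∧ ((v ∈ s ∧ f v ∉ s) ∧ (w ∈ s ∧ f w ∉ s))).card : ℝ)
        = (N.choose m : ℝ) * ((m : ℝ) * ((m : ℝ) - 1)) * ((n : ℝ) * ((n : ℝ) - 1))
            / ((N : ℝ) * ((N : ℝ) - 1) * ((N : ℝ) - 2) * ((N : ℝ) - 3)) := by
    intro v w hwv hwfv
    have hvw : v ≠ w := hwv.symm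
    have hvfw : v ≠ f w := by
      intro h
      apply hwfv
      rw [h, hinv]
    have h := countR2 (V := V) m n hmnV v w (f v) (f w) hvw
      (fun h => hvw (by rw [← hinv v, h, hinv])) (fun h => hne v h.symm) hvfw hwfv
      (fun h => hne w h.symm)
    rw [hmnR, hmn] at h
    rw [eq_div_iff (ne_of_gt (mul_pos (mul_pos (mul_pos hp0 hp1) hp2) hp3))]
    exact h
  -- the first moment sum
  have hsum1 : (∑ s ∈ S, ((univ.filter fun v => v ∈ s ∧ f v ∉ s).card : ℝ))
      = (N : ℝ) * ((N.choose m : ℝ) * (m * n) / ((N : ℝ) * ((N : ℝ) - 1))) := by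
    calc (∑ s ∈ S, ((univ.filter fun v => v ∈ s ∧ f v ∉ s).card : ℝ))
        = ∑ s ∈ S, ∑ v : V, (if v ∈ s ∧ f v ∉ s then (1 : ℝ) else 0) := by
          exact sum_congr rfl fun s _ => hind s
      _ = ∑ v : V, ∑ s ∈ S, (if v ∈ s ∧ f v ∉ s then (1 : ℝ) else 0) := sum_comm
      _ = ∑ v : V, ((S.filter fun s => v ∈ s ∧ f v ∉ s).card : ℝ) := by
          exact sum_congr rfl fun v _ => (sum_boole _ _)
      _ = ∑ v : V, ((univ.filter fun s : Finset V =>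
            s.card = m ∧ (v ∈ s ∧ f v ∉ s)).card : ℝ) := by
          apply sum_congr rfl
          intro v _
          rw [hS, filter_filter]
      _ = ∑ v : V, ((N.choose m : ℝ) * (m * n) / ((N : ℝ) * ((N : ℝ) - 1))) := by
          exact sum_congr rfl fun v _ => hc1 v
      _ = (N : ℝ) * ((N.choose m : ℝ) * (m * n) / ((N : ℝ) * ((N : ℝ) - 1))) := by
          rw [sum_const, card_univ, ← hN, nsmul_eq_mul]
  -- the second moment sum
  have hsum2 : (∑ s ∈ S, ((univ.filter fun v => v ∈ s ∧ f v ∉ s).card : ℝ) ^ 2)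
      = (N : ℝ) * ((N.choose m : ℝ) * (m * n) / ((N : ℝ) * ((N : ℝ) - 1))
          + ((N : ℝ) - 2) * ((N.choose m : ℝ) * ((m : ℝ) * ((m : ℝ) - 1))
              * ((n : ℝ) * ((n : ℝ) - 1))
            / ((N : ℝ) * ((N : ℝ) - 1) * ((N : ℝ) - 2) * ((N : ℝ) - 3)))) := by
    have hsq : ∀ s ∈ S, ((univ.filter fun v => v ∈ s ∧ f v ∉ s).card : ℝ) ^ 2
        = ∑ v : V, ∑ w : V,
            (if (v ∈ s ∧ f v ∉ s) ∧ (w ∈ s ∧ f w ∉ s) then (1 : ℝ) else 0) := by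
      intro s _
      rw [sq, hind s, sum_mul_sum]
      apply sum_congr rfl
      intro v _
      apply sum_congr rfl
      intro w _
      split_ifs with h1 h2 h3 <;> simp_all
    rw [sum_congr rfl hsq, sum_comm]
    have hswap : ∀ v : V, (∑ s ∈ S, ∑ w : V,
        (if (v ∈ s ∧ f v ∉ s) ∧ (w ∈ s ∧ f w ∉ s) then (1 : ℝ) else 0))
        = ∑ w : V, ∑ s ∈ S,
            (if (v ∈ s ∧ f v ∉ s) ∧ (w ∈ s ∧ f w ∉ s) then (1 : ℝ) else 0) := by
      intro v; exact sum_comm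
    rw [sum_congr rfl fun v _ => hswap v]
    have hinner : ∀ v : V, (∑ w : V, ∑ s ∈ S,
        (if (v ∈ s ∧ f v ∉ s) ∧ (w ∈ s ∧ f w ∉ s) then (1 : ℝ) else 0))
        = (N.choose m : ℝ) * (m * n) / ((N : ℝ) * ((N : ℝ) - 1))
          + ((N : ℝ) - 2) * ((N.choose m : ℝ) * ((m : ℝ) * ((m : ℝ) - 1))
              * ((n : ℝ) * ((n : ℝ) - 1))
            / ((N : ℝ) * ((N : ℝ) - 1) * ((N : ℝ) - 2) * ((N : ℝ) - 3))) := by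
      intro v
      have hcards : ∀ w : V, (∑ s ∈ S,
          (if (v ∈ s ∧ f v ∉ s) ∧ (w ∈ s ∧ f w ∉ s) then (1 : ℝ) else 0))
          = ((univ.filter fun s : Finset V =>
              s.card = m ∧ ((v ∈ s ∧ f v ∉ s) ∧ (w ∈ s ∧ f w ∉ s))).card : ℝ) := by
        intro w
        rw [sum_boole, hS, filter_filter]
      rw [sum_congr rfl fun w _ => hcards w]
      -- split the w-sum into w = v, w = f v, and the rest
      have huniv : (univ : Finset V) = insert v (insert (f v) (univ \ {v, f v})) := by
        ext x
        simp only [mem_insert, mem_sdiff, mem_univ, true_and, mem_singleton, true_iff]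
        by_cases h1 : x = v
        · tauto
        · by_cases h2 : x = f v <;> tauto
      have hvnot : v ∉ insert (f v) (univ \ {v, f v}) := by
        intro hmem
        rcases mem_insert.mp hmem with h | h
        · exact hne v h.symm
        · exact (mem_sdiff.mp h).2 (mem_insert_self v _)
      have hfvnot : f v ∉ univ \ {v, f v} := by
        simp
      rw [huniv, sum_insert hvnot, sum_insert hfvnot]
      have hterm_v : ((univ.filter fun s : Finset V =>
          s.card = m ∧ ((v ∈ s ∧ f v ∉ s) ∧ (v ∈ s ∧ f v ∉ s))).card : ℝ)
          = (N.choose m : ℝ) * (m * n) / ((N : ℝ) * ((N : ℝ) - 1)) := by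
        rw [show (univ.filter fun s : Finset V =>
            s.card = m ∧ ((v ∈ s ∧ f v ∉ s) ∧ (v ∈ s ∧ f v ∉ s)))
          = (univ.filter fun s : Finset V => s.card = m ∧ (v ∈ s ∧ f v ∉ s)) from
          filter_congr (by intro s _; tauto)]
        exact hc1 v
      have hterm_fv : ((univ.filter fun s : Finset V =>
          s.card = m ∧ ((v ∈ s ∧ f v ∉ s) ∧ (f v ∈ s ∧ f (f v) ∉ s))).card : ℝ) = 0 := by
        rw [show (univ.filter fun s : Finset V =>
            s.card = m ∧ ((v ∈ s ∧ f v ∉ s) ∧ (f v ∈ s ∧ f (f v) ∉ s))) = ∅ from by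
          rw [filter_eq_empty_iff]; rintro s _ ⟨_, ⟨_, h1⟩, ⟨h2, _⟩⟩; exact h1 h2]
        simp
      have hterm_rest : ∀ w ∈ univ \ {v, f v},
          ((univ.filter fun s : Finset V =>
            s.card = m ∧ ((v ∈ s ∧ f v ∉ s) ∧ (w ∈ s ∧ f w ∉ s))).card : ℝ)
          = (N.choose m : ℝ) * ((m : ℝ) * ((m : ℝ) - 1)) * ((n : ℝ) * ((n : ℝ) - 1))
              / ((N : ℝ) * ((N : ℝ) - 1) * ((N : ℝ) - 2) * ((N : ℝ) - 3)) := by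
        intro w hw
        simp only [mem_sdiff, mem_univ, true_and, mem_insert, mem_singleton] at hw
        push_neg at hw
        exact hc2 v w hw.1 hw.2
      rw [hterm_v, hterm_fv, sum_congr rfl hterm_rest, sum_const, nsmul_eq_mul]
      have hvfv : v ∉ ({f v} : Finset V) := by
        simp only [mem_singleton]
        exact fun h => hne v h.symm
      have hrestcard : (univ \ ({v, f v} : Finset V)).card = N - 2 := by
        rw [card_sdiff_of_subset (subset_univ _), card_univ, ← hN]
        congr 1
        rw [card_insert_of_notMem hvfv, card_singleton]
      rw [hrestcard]
      have : ((N - 2 : ℕ) : ℝ) = (N : ℝ) - 2 := by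
        have : (2 : ℕ) ≤ N := by omega
        push_cast [Nat.cast_sub this]
        ring
      rw [this]
      ring
    rw [sum_congr rfl fun v _ => hinner v, sum_const, card_univ, ← hN, nsmul_eq_mul]
  -- final computation
  rw [hsum1, hsum2, hScard]
  have h1 : (N : ℝ) - 1 ≠ 0 := by nlinarith
  have h2 : (N : ℝ) - 2 ≠ 0 := by nlinarith
  have h3 : (N : ℝ) - 3 ≠ 0 := by nlinarith
  have h0 : (N : ℝ) ≠ 0 := by nlinarith
  have hT : (N.choose m : ℝ) ≠ 0 := ne_of_gt hT0
  field_simp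
  rw [← hmnR]
  ring
end

section
/- If the cross-match statistic satisfies the stability property |A(S ∪ {s,t}) - A(S)| ≤ k for all finite point sets S and pairs {s,t}, then for Poissonized sample sizes M ~ Poisson(m), N ~ Poisson(n), the Poissonized and fixed-sample cross-match statistics satisfy |A'_{m,n} - A_{m,n}| ≤ k(|M - m| + |N - n|), and hence (m+n)^{-1} E|A'_{m,n} - A_{m,n}| → 0 as m, n → ∞. -/
open Filter ProbabilityTheory Real Nat
open scoped NNReal

section PoissonHelpers

lemma crossmatch_tsum_pow_div_fact (x : ℝ) : ∑' n : ℕ, x ^ n / n ! = Real.exp x := by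
  rw [Real.exp_eq_exp_ℝ, NormedSpace.exp_eq_tsum_div]

lemma crossmatch_pois_shift1 (r : ℝ≥0) (i : ℕ) :
    poissonPMFReal r (i + 1) * ((i : ℝ) + 1) = (Real.exp (-(r:ℝ)) * r) * ((r:ℝ) ^ i / i !) := by
  have hfac : ((i+1)! : ℝ) = ((i:ℝ)+1) * (i ! : ℝ) := by
    rw [Nat.factorial_succ]; push_cast; ring
  have h1 : ((i:ℝ) + 1) ≠ 0 := by positivity
  have h2 : ((i ! : ℕ) : ℝ) ≠ 0 := Nat.cast_ne_zero.mpr (Nat.factorial_ne_zero i)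
  unfold poissonPMFReal
  rw [hfac]
  field_simp
  ring

lemma crossmatch_pois_summable_mul (r : ℝ≥0) :
    Summable (fun i : ℕ => poissonPMFReal r i * (i : ℝ)) := by
  rw [← summable_nat_add_iff 1]
  rw [show (fun i : ℕ => poissonPMFReal r (i + 1) * ((i + 1 : ℕ) : ℝ)) =
      fun i : ℕ => (Real.exp (-(r:ℝ)) * r) * ((r:ℝ) ^ i / i !) by
    funext i; push_cast; exact crossmatch_pois_shift1 r i]
  exact (Real.summable_pow_div_factorial _).mul_left _

lemma crossmatch_pois_mean (r : ℝ≥0) : ∑' i : ℕ, poissonPMFReal r i * (i : ℝ) = r := by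
  rw [Summable.tsum_eq_zero_add (crossmatch_pois_summable_mul r)]
  simp only [Nat.cast_zero, mul_zero, zero_add, Nat.cast_add, Nat.cast_one]
  rw [show (fun i : ℕ => poissonPMFReal r (i + 1) * ((i:ℝ) + 1)) =
      fun i : ℕ => (Real.exp (-(r:ℝ)) * r) * ((r:ℝ) ^ i / i !) by
    funext i; exact crossmatch_pois_shift1 r i]
  rw [tsum_mul_left, crossmatch_tsum_pow_div_fact, mul_assoc, mul_comm (r:ℝ), ← mul_assoc,
    ← Real.exp_add]
  simp

lemma crossmatch_pois_shift2 (r : ℝ≥0) (i : ℕ) :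
    poissonPMFReal r (i + 2) * ((i : ℝ) + 2) * ((i : ℝ) + 1)
      = (Real.exp (-(r:ℝ)) * r ^ 2) * ((r:ℝ) ^ i / i !) := by
  have hfac : ((i+2)! : ℝ) = ((i:ℝ)+2) * (((i:ℝ)+1) * (i ! : ℝ)) := by
    rw [show i + 2 = (i+1) + 1 from rfl, Nat.factorial_succ, Nat.factorial_succ]; push_cast; ring
  have h1 : ((i:ℝ) + 1) ≠ 0 := by positivity
  have h12 : ((i:ℝ) + 2) ≠ 0 := by positivity
  have h2 : ((i ! : ℕ) : ℝ) ≠ 0 := Nat.cast_ne_zero.mpr (Nat.factorial_ne_zero i)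
  unfold poissonPMFReal
  rw [hfac]
  field_simp
  ring

lemma crossmatch_pois_summable_mul2 (r : ℝ≥0) :
    Summable (fun i : ℕ => poissonPMFReal r i * (i : ℝ) * ((i : ℝ) - 1)) := by
  rw [← summable_nat_add_iff 2]
  rw [show (fun i : ℕ => poissonPMFReal r (i + 2) * ((i + 2 : ℕ) : ℝ) * (((i + 2 : ℕ) : ℝ) - 1)) =
      fun i : ℕ => (Real.exp (-(r:ℝ)) * r ^ 2) * ((r:ℝ) ^ i / i !) by
    funext i; push_cast; rw [show (i:ℝ) + 2 - 1 = (i:ℝ) + 1 by ring]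
    exact crossmatch_pois_shift2 r i]
  exact (Real.summable_pow_div_factorial _).mul_left _

lemma crossmatch_pois_fact2 (r : ℝ≥0) :
    ∑' i : ℕ, poissonPMFReal r i * (i : ℝ) * ((i : ℝ) - 1) = (r:ℝ) ^ 2 := by
  have hs := crossmatch_pois_summable_mul2 r
  rw [Summable.tsum_eq_zero_add hs]
  have hs1 : Summable (fun i : ℕ =>
      poissonPMFReal r (i+1) * ((i+1 : ℕ) : ℝ) * (((i+1 : ℕ) : ℝ) - 1)) :=
    (summable_nat_add_iff 1).mpr hs
  rw [Summable.tsum_eq_zero_add hs1]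
  simp only [Nat.cast_zero, Nat.cast_add, Nat.cast_one, mul_zero, zero_mul, zero_add]
  rw [show (fun i : ℕ => poissonPMFReal r (i + 1 + 1) * ((i:ℝ) + 1 + 1) * ((i:ℝ) + 1 + 1 - 1)) =
      fun i : ℕ => (Real.exp (-(r:ℝ)) * r ^ 2) * ((r:ℝ) ^ i / i !) by
    funext i
    have := crossmatch_pois_shift2 r i
    rw [show (i:ℝ) + 1 + 1 - 1 = (i:ℝ) + 1 by ring, show (i:ℝ) + 1 + 1 = (i:ℝ) + 2 by ring]
    rw [show i + 1 + 1 = i + 2 from rfl]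
    exact this]
  rw [tsum_mul_left, crossmatch_tsum_pow_div_fact]
  have he : rexp (-(r:ℝ)) * rexp (r:ℝ) = 1 := by rw [← Real.exp_add]; simp
  linear_combination (r:ℝ)^2 * he

lemma crossmatch_pois_tsum (r : ℝ≥0) : ∑' i : ℕ, poissonPMFReal r i = 1 :=
  (poissonPMFRealSum r).tsum_eq

lemma crossmatch_pois_sq_summable (r : ℝ≥0) :
    Summable (fun i : ℕ => poissonPMFReal r i * ((i : ℝ) - (r:ℝ)) ^ 2) := by
  have hsum := (poissonPMFRealSum r).summable
  have key : (fun i : ℕ => poissonPMFReal r i * ((i : ℝ) - (r:ℝ)) ^ 2) =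
      fun i : ℕ => poissonPMFReal r i * (i:ℝ) * ((i:ℝ) - 1)
        + ((1 - 2*(r:ℝ)) * (poissonPMFReal r i * (i:ℝ)) + (r:ℝ)^2 * poissonPMFReal r i) := by
    funext i; ring
  rw [key]
  exact (crossmatch_pois_summable_mul2 r).add
    (((crossmatch_pois_summable_mul r).mul_left _).add (hsum.mul_left _))

lemma crossmatch_pois_var (r : ℝ≥0) :
    ∑' i : ℕ, poissonPMFReal r i * ((i : ℝ) - (r:ℝ)) ^ 2 = (r:ℝ) := by
  have hsum := (poissonPMFRealSum r).summable
  have h1 := crossmatch_pois_summable_mul r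
  have h2 := crossmatch_pois_summable_mul2 r
  have key : (fun i : ℕ => poissonPMFReal r i * ((i : ℝ) - (r:ℝ)) ^ 2) =
      fun i : ℕ => poissonPMFReal r i * (i:ℝ) * ((i:ℝ) - 1)
        + ((1 - 2*(r:ℝ)) * (poissonPMFReal r i * (i:ℝ)) + (r:ℝ)^2 * poissonPMFReal r i) := by
    funext i; ring
  rw [key, Summable.tsum_add h2 ((h1.mul_left _).add
      ((show Summable (poissonPMFReal r) from hsum).mul_left ((r:ℝ)^2))),
    Summable.tsum_add (h1.mul_left _)
      ((show Summable (poissonPMFReal r) from hsum).mul_left ((r:ℝ)^2)), tsum_mul_left, tsum_mul_left,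
    crossmatch_pois_fact2, crossmatch_pois_mean, crossmatch_pois_tsum]
  ring

lemma crossmatch_abs_le_aux {a x c : ℝ} (hc : 0 < c) : |a - x| ≤ ((a - x)^2 + c^2) / (2*c) := by
  rw [le_div_iff₀ (by positivity : (0:ℝ) < 2*c)]
  nlinarith [sq_nonneg (|a - x| - c), sq_abs (a - x)]

lemma crossmatch_pois_mad_summable (r : ℝ≥0) (hr : 0 < (r:ℝ)) :
    Summable (fun i : ℕ => poissonPMFReal r i * |(i : ℝ) - (r:ℝ)|) := by
  have hsum := (poissonPMFRealSum r).summable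
  have hv : Summable (fun i : ℕ =>
      poissonPMFReal r i * (((i:ℝ) - (r:ℝ))^2 + (r:ℝ)) / (2*Real.sqrt r)) := by
    have := ((crossmatch_pois_sq_summable r).add (hsum.mul_left (r:ℝ))).mul_right
      (1/(2*Real.sqrt r))
    apply this.congr
    intro i; unfold poissonPMFReal; field_simp
  apply Summable.of_nonneg_of_le
    (fun i => mul_nonneg poissonPMFReal_nonneg (abs_nonneg _)) _ hv
  intro i
  have hc : (0:ℝ) < Real.sqrt r := Real.sqrt_pos.mpr hr
  have h := crossmatch_abs_le_aux (a := (i:ℝ)) (x := (r:ℝ)) hc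
  rw [Real.sq_sqrt hr.le] at h
  calc poissonPMFReal r i * |(i:ℝ) - r|
      ≤ poissonPMFReal r i * ((((i:ℝ)-r)^2 + r)/(2*Real.sqrt r)) :=
        mul_le_mul_of_nonneg_left h poissonPMFReal_nonneg
    _ = poissonPMFReal r i * (((i:ℝ)-r)^2 + r) / (2*Real.sqrt r) := by ring

lemma crossmatch_pois_mad (r : ℝ≥0) (hr : 0 < (r:ℝ)) :
    ∑' i : ℕ, poissonPMFReal r i * |(i : ℝ) - (r:ℝ)| ≤ Real.sqrt r := by
  have hsum := (poissonPMFRealSum r).summable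
  have hc : (0:ℝ) < Real.sqrt r := Real.sqrt_pos.mpr hr
  have hv2 := crossmatch_pois_sq_summable r
  have hv : Summable (fun i : ℕ =>
      (poissonPMFReal r i * ((i:ℝ)-(r:ℝ))^2 + (r:ℝ) * poissonPMFReal r i) * (1/(2*Real.sqrt r))) :=
    (hv2.add (hsum.mul_left _)).mul_right _
  have hle : ∀ i : ℕ, poissonPMFReal r i * |(i:ℝ) - (r:ℝ)| ≤
      (poissonPMFReal r i * ((i:ℝ)-(r:ℝ))^2 + (r:ℝ) * poissonPMFReal r i) * (1/(2*Real.sqrt r)) := by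
    intro i
    have h := crossmatch_abs_le_aux (a := (i:ℝ)) (x := (r:ℝ)) hc
    rw [Real.sq_sqrt hr.le] at h
    calc poissonPMFReal r i * |(i:ℝ) - r|
        ≤ poissonPMFReal r i * ((((i:ℝ)-r)^2 + r)/(2*Real.sqrt r)) :=
          mul_le_mul_of_nonneg_left h poissonPMFReal_nonneg
      _ = (poissonPMFReal r i * ((i:ℝ)-(r:ℝ))^2 + (r:ℝ) * poissonPMFReal r i) *
            (1/(2*Real.sqrt r)) := by ring
  have := Summable.tsum_le_tsum hle (crossmatch_pois_mad_summable r hr) hv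
  refine this.trans ?_
  rw [tsum_mul_right, Summable.tsum_add hv2
    ((show Summable (poissonPMFReal r) from hsum).mul_left (r:ℝ)), tsum_mul_left, crossmatch_pois_var,
    crossmatch_pois_tsum]
  rw [mul_one]
  rw [show ((r:ℝ) + (r:ℝ)) * (1/(2*Real.sqrt r)) = (r:ℝ) / Real.sqrt r by
    field_simp
    nlinarith [Real.sq_sqrt hr.le, Real.sqrt_nonneg (r:ℝ)]]
  rw [Real.div_sqrt]

lemma crossmatch_abs_step_bound {g : ℕ → ℝ} {k : ℝ} (h : ∀ i, |g (i+1) - g i| ≤ k) :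
    ∀ a b : ℕ, |g a - g b| ≤ k * |(a:ℝ) - (b:ℝ)| := by
  have key : ∀ (b t : ℕ), |g (b + t) - g b| ≤ k * t := by
    intro b t
    induction t with
    | zero => simp
    | succ t ih =>
      calc |g (b+(t+1)) - g b| ≤ |g (b+t+1) - g (b+t)| + |g (b+t) - g b| := by
            rw [show b+(t+1) = b+t+1 from rfl]; exact abs_sub_le _ _ _
        _ ≤ k + k * t := add_le_add (h (b+t)) ih
        _ = k * ((t+1 : ℕ):ℝ) := by push_cast; ring
  intro a b
  rcases le_total b a with hba | hab
  · obtain ⟨t, rfl⟩ := Nat.exists_eq_add_of_le hba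
    have := key b t
    rwa [show ((b+t : ℕ) : ℝ) - (b:ℝ) = (t:ℝ) by push_cast; ring,
      abs_of_nonneg (by positivity : (0:ℝ) ≤ (t:ℝ))]
  · obtain ⟨t, rfl⟩ := Nat.exists_eq_add_of_le hab
    have := key a t
    rw [abs_sub_comm]
    rwa [show ((a:ℝ)) - ((a+t : ℕ):ℝ) = -(t:ℝ) by push_cast; ring, abs_neg,
      abs_of_nonneg (by positivity : (0:ℝ) ≤ (t:ℝ))]

end PoissonHelpers

set_option maxHeartbeats 1000000 in
/-- If the cross-match statistic `A` on labeled point sets satisfies the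
stability property `|A(S ∪ {s,t}) - A(S)| ≤ k`, then for Poissonized sample sizes
`M ~ Poisson(m)`, `N ~ Poisson(n)` (built on the same i.i.d. sequences of label-1 points
`X1` and label-0 points `X0`), the Poissonized and fixed-sample statistics satisfy
`|A'_{m,n} - A_{m,n}| ≤ k(|M - m| + |N - n|)` and hence
`(m+n)⁻¹ E|A'_{m,n} - A_{m,n}| → 0` as `m, n → ∞`. -/
theorem poissonized_crossmatch_stability {d : ℕ} (k : ℝ) (hk : 0 ≤ k)
    (A : Finset ((Fin d → ℝ) × Bool) → ℕ)
    (hstab : ∀ (S : Finset ((Fin d → ℝ) × Bool)) (s t : (Fin d → ℝ) × Bool),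
      |(A (S ∪ {s, t}) : ℝ) - (A S : ℝ)| ≤ k)
    (X1 X0 : ℕ → (Fin d → ℝ))
    (hX1 : Function.Injective X1) (hX0 : Function.Injective X0)
    (hdisj : ∀ i j, X1 i ≠ X0 j)
    (m n : ℕ → ℕ)
    (hm : Tendsto (fun j : ℕ => ((m j : ℝ))) atTop atTop)
    (hn : Tendsto (fun j : ℕ => ((n j : ℝ))) atTop atTop) :
    (∀ M N i j : ℕ,
      |(A (((Finset.range M).image fun l => (X1 l, true)) ∪
            ((Finset.range N).image fun l => (X0 l, false))) : ℝ) -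
       (A (((Finset.range i).image fun l => (X1 l, true)) ∪
            ((Finset.range j).image fun l => (X0 l, false))) : ℝ)|
        ≤ k * (|(M : ℝ) - (i : ℝ)| + |(N : ℝ) - (j : ℝ)|)) ∧
    Tendsto (fun j : ℕ =>
        (∑' p : ℕ × ℕ,
          poissonPMFReal (m j : NNReal) p.1 * poissonPMFReal (n j : NNReal) p.2 *
          |(A (((Finset.range p.1).image fun l => (X1 l, true)) ∪
                ((Finset.range p.2).image fun l => (X0 l, false))) : ℝ) -
           (A (((Finset.range (m j)).image fun l => (X1 l, true)) ∪
                ((Finset.range (n j)).image fun l => (X0 l, false))) : ℝ)|) /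
        ((m j : ℝ) + (n j : ℝ)))
      atTop (nhds 0) := by
  -- Part 1
  set F1 : ℕ → Finset ((Fin d → ℝ) × Bool) :=
    fun a => (Finset.range a).image fun l => (X1 l, true) with hF1
  set F0 : ℕ → Finset ((Fin d → ℝ) × Bool) :=
    fun b => (Finset.range b).image fun l => (X0 l, false) with hF0
  have hs1 : ∀ (T : Finset ((Fin d → ℝ) × Bool)) (a : ℕ),
      |(A (F1 (a+1) ∪ T) : ℝ) - (A (F1 a ∪ T) : ℝ)| ≤ k := by
    intro T a
    have h := hstab (F1 a ∪ T) (X1 a, true) (X1 a, true)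
    have heq : (F1 a ∪ T) ∪ {(X1 a, true), (X1 a, true)} = F1 (a+1) ∪ T := by
      ext x
      simp only [hF1, Finset.range_add_one, Finset.image_insert, Finset.insert_union,
        Finset.mem_union, Finset.mem_insert, Finset.mem_singleton, Finset.mem_image,
        Finset.mem_range]
      aesop
    rwa [heq] at h
  have hs0 : ∀ (S : Finset ((Fin d → ℝ) × Bool)) (b : ℕ),
      |(A (S ∪ F0 (b+1)) : ℝ) - (A (S ∪ F0 b) : ℝ)| ≤ k := by
    intro S b
    have h := hstab (S ∪ F0 b) (X0 b, false) (X0 b, false)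
    have heq : (S ∪ F0 b) ∪ {(X0 b, false), (X0 b, false)} = S ∪ F0 (b+1) := by
      ext x
      simp only [hF0, Finset.range_add_one, Finset.image_insert, Finset.union_insert,
        Finset.mem_union, Finset.mem_insert, Finset.mem_singleton, Finset.mem_image,
        Finset.mem_range]
      aesop
    rwa [heq] at h
  have part1 : ∀ M N i j : ℕ,
      |(A (F1 M ∪ F0 N) : ℝ) - (A (F1 i ∪ F0 j) : ℝ)|
        ≤ k * (|(M : ℝ) - (i : ℝ)| + |(N : ℝ) - (j : ℝ)|) := by
    intro M N i j
    have t1 : |(A (F1 M ∪ F0 N) : ℝ) - (A (F1 i ∪ F0 N) : ℝ)| ≤ k * |(M:ℝ) - (i:ℝ)| :=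
      crossmatch_abs_step_bound (g := fun a => (A (F1 a ∪ F0 N) : ℝ))
        (fun a => hs1 (F0 N) a) M i
    have t2 : |(A (F1 i ∪ F0 N) : ℝ) - (A (F1 i ∪ F0 j) : ℝ)| ≤ k * |(N:ℝ) - (j:ℝ)| :=
      crossmatch_abs_step_bound (g := fun b => (A (F1 i ∪ F0 b) : ℝ))
        (fun b => hs0 (F1 i) b) N j
    calc |(A (F1 M ∪ F0 N) : ℝ) - (A (F1 i ∪ F0 j) : ℝ)|
        ≤ |(A (F1 M ∪ F0 N) : ℝ) - (A (F1 i ∪ F0 N) : ℝ)| +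
          |(A (F1 i ∪ F0 N) : ℝ) - (A (F1 i ∪ F0 j) : ℝ)| := abs_sub_le _ _ _
      _ ≤ k * |(M:ℝ) - (i:ℝ)| + k * |(N:ℝ) - (j:ℝ)| := add_le_add t1 t2
      _ = k * (|(M:ℝ) - (i:ℝ)| + |(N:ℝ) - (j:ℝ)|) := by ring
  refine ⟨part1, ?_⟩
  -- Part 2
  have hsm : Tendsto (fun j => Real.sqrt (m j : ℝ)) atTop atTop := by
    refine ((tendsto_rpow_atTop (by norm_num : (0:ℝ) < 1/2)).comp hm).congr fun j => ?_
    exact (Real.sqrt_eq_rpow _).symm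
  have hsn : Tendsto (fun j => Real.sqrt (n j : ℝ)) atTop atTop := by
    refine ((tendsto_rpow_atTop (by norm_num : (0:ℝ) < 1/2)).comp hn).congr fun j => ?_
    exact (Real.sqrt_eq_rpow _).symm
  have hV : Tendsto (fun j => k * ((Real.sqrt (m j : ℝ))⁻¹ + (Real.sqrt (n j : ℝ))⁻¹))
      atTop (nhds 0) := by
    have := (hsm.inv_tendsto_atTop.add hsn.inv_tendsto_atTop).const_mul k
    simpa using this
  refine squeeze_zero' ?_ ?_ hV
  · filter_upwards with j
    refine div_nonneg (tsum_nonneg fun p => ?_) (by positivity)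
    exact mul_nonneg (mul_nonneg poissonPMFReal_nonneg poissonPMFReal_nonneg) (abs_nonneg _)
  · filter_upwards [hm.eventually_ge_atTop 1, hn.eventually_ge_atTop 1] with j hma hnb
    have hra : (((m j : ℝ≥0)) : ℝ) = (m j : ℝ) := NNReal.coe_natCast (m j)
    have hrb : (((n j : ℝ≥0)) : ℝ) = (n j : ℝ) := NNReal.coe_natCast (n j)
    have ha0 : (0:ℝ) < ((m j : ℝ≥0) : ℝ) := by rw [hra]; linarith
    have hb0 : (0:ℝ) < ((n j : ℝ≥0) : ℝ) := by rw [hrb]; linarith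
    have SA := crossmatch_pois_mad_summable (m j : ℝ≥0) ha0
    have MA := crossmatch_pois_mad (m j : ℝ≥0) ha0
    have SB := crossmatch_pois_mad_summable (n j : ℝ≥0) hb0
    have MB := crossmatch_pois_mad (n j : ℝ≥0) hb0
    rw [hra] at SA MA
    rw [hrb] at SB MB
    have sumPA := (poissonPMFRealSum (m j : ℝ≥0)).summable
    have sumPB := (poissonPMFRealSum (n j : ℝ≥0)).summable
    set pa := poissonPMFReal (m j : ℝ≥0) with hpa
    set pb := poissonPMFReal (n j : ℝ≥0) with hpb
    set D : ℕ × ℕ → ℝ := fun p =>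
      |(A (F1 p.1 ∪ F0 p.2) : ℝ) - (A (F1 (m j) ∪ F0 (n j)) : ℝ)| with hD
    have hDle : ∀ p : ℕ × ℕ,
        D p ≤ k * (|(p.1:ℝ) - (m j:ℝ)| + |(p.2:ℝ) - (n j:ℝ)|) :=
      fun p => part1 p.1 p.2 (m j) (n j)
    have h1sum : Summable (fun p : ℕ × ℕ => (pa p.1 * |(p.1:ℝ) - (m j:ℝ)|) * pb p.2) :=
      SA.mul_of_nonneg sumPB
        (fun i => mul_nonneg poissonPMFReal_nonneg (abs_nonneg _))
        (fun i => poissonPMFReal_nonneg)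
    have h2sum : Summable (fun p : ℕ × ℕ => pa p.1 * (pb p.2 * |(p.2:ℝ) - (n j:ℝ)|)) :=
      sumPA.mul_of_nonneg SB
        (fun i => poissonPMFReal_nonneg)
        (fun i => mul_nonneg poissonPMFReal_nonneg (abs_nonneg _))
    have hGsum : Summable (fun p : ℕ × ℕ =>
        k * ((pa p.1 * |(p.1:ℝ) - (m j:ℝ)|) * pb p.2)
          + k * (pa p.1 * (pb p.2 * |(p.2:ℝ) - (n j:ℝ)|))) :=
      (h1sum.mul_left k).add (h2sum.mul_left k)
    have hG : ∀ p : ℕ × ℕ, pa p.1 * pb p.2 * D p ≤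
        k * ((pa p.1 * |(p.1:ℝ) - (m j:ℝ)|) * pb p.2)
          + k * (pa p.1 * (pb p.2 * |(p.2:ℝ) - (n j:ℝ)|)) := by
      intro p
      have h1 := mul_le_mul_of_nonneg_left (hDle p)
        (mul_nonneg (poissonPMFReal_nonneg (r := (m j : ℝ≥0)) (n := p.1))
          (poissonPMFReal_nonneg (r := (n j : ℝ≥0)) (n := p.2)))
      calc pa p.1 * pb p.2 * D p
          ≤ pa p.1 * pb p.2 * (k * (|(p.1:ℝ) - (m j:ℝ)| + |(p.2:ℝ) - (n j:ℝ)|)) := h1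
        _ = k * ((pa p.1 * |(p.1:ℝ) - (m j:ℝ)|) * pb p.2)
              + k * (pa p.1 * (pb p.2 * |(p.2:ℝ) - (n j:ℝ)|)) := by ring
    have hFsum : Summable (fun p : ℕ × ℕ => pa p.1 * pb p.2 * D p) :=
      Summable.of_nonneg_of_le
        (fun p => mul_nonneg (mul_nonneg poissonPMFReal_nonneg poissonPMFReal_nonneg)
          (abs_nonneg _)) hG hGsum
    have hT : (∑' p : ℕ × ℕ, pa p.1 * pb p.2 * D p) ≤
        k * (Real.sqrt (m j : ℝ) + Real.sqrt (n j : ℝ)) := by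
      refine (Summable.tsum_le_tsum hG hFsum hGsum).trans ?_
      rw [Summable.tsum_add (h1sum.mul_left k) (h2sum.mul_left k), tsum_mul_left, tsum_mul_left,
        ← Summable.tsum_mul_tsum SA (show Summable pb from sumPB) h1sum,
        ← Summable.tsum_mul_tsum (show Summable pa from sumPA) SB h2sum,
        crossmatch_pois_tsum, crossmatch_pois_tsum, mul_one, one_mul]
      have := add_le_add MA MB
      calc k * (∑' i : ℕ, pa i * |(i:ℝ) - (m j:ℝ)|) + k * (∑' i : ℕ, pb i * |(i:ℝ) - (n j:ℝ)|)
          = k * ((∑' i : ℕ, pa i * |(i:ℝ) - (m j:ℝ)|) + ∑' i : ℕ, pb i * |(i:ℝ) - (n j:ℝ)|) := by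
            ring
        _ ≤ k * (Real.sqrt (m j : ℝ) + Real.sqrt (n j : ℝ)) :=
            mul_le_mul_of_nonneg_left this hk
    -- now the division bound
    have hab : (0:ℝ) < (m j : ℝ) + (n j : ℝ) := by linarith
    calc (∑' p : ℕ × ℕ, pa p.1 * pb p.2 * D p) / ((m j : ℝ) + (n j : ℝ))
        ≤ (k * (Real.sqrt (m j : ℝ) + Real.sqrt (n j : ℝ))) / ((m j : ℝ) + (n j : ℝ)) := by
          gcongr
      _ = k * (Real.sqrt (m j : ℝ) / ((m j : ℝ) + (n j : ℝ))
            + Real.sqrt (n j : ℝ) / ((m j : ℝ) + (n j : ℝ))) := by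
          rw [← add_div]; ring
      _ ≤ k * ((Real.sqrt (m j : ℝ))⁻¹ + (Real.sqrt (n j : ℝ))⁻¹) := by
          refine mul_le_mul_of_nonneg_left (add_le_add ?_ ?_) hk
          · calc Real.sqrt (m j : ℝ) / ((m j : ℝ) + (n j : ℝ))
                ≤ Real.sqrt (m j : ℝ) / (m j : ℝ) := by
                  gcongr <;> linarith
              _ = (Real.sqrt (m j : ℝ))⁻¹ := by rw [Real.sqrt_div_self', one_div]
          · calc Real.sqrt (n j : ℝ) / ((m j : ℝ) + (n j : ℝ))
                ≤ Real.sqrt (n j : ℝ) / (n j : ℝ) := by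
                  gcongr <;> linarith
              _ = (Real.sqrt (n j : ℝ))⁻¹ := by rw [Real.sqrt_div_self', one_div]
end
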